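/- Let p be a polynomial in variables x₁,…,x_m all of whose monomials have even total degree, and consider constraint polynomials g₁,…,g_r also having only even-degree monomials. If y is a feasible moment sequence for the order-γ moment relaxation (i.e., M_γ{y} ⪰ 0, the localizing matrices are PSD, and y₀ = 1), then the modified sequence y' obtained by setting y'_α = y_α for |α| even and y'_α = 0 for |α| odd is also feasible, and L_{y'}{p} = L_y{p}. -/

import Mathlib

lemma psd_zero_cross {n : Type*} [Fintype n]
    (M : Matrix n n ℝ) (hM : M.PosSemidef) (P : n → Bool) :
    (Matrix.of fun i j => if P i = P j then M i j else 0).PosSemidef := by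
  rw [Matrix.posSemidef_iff_dotProduct_mulVec]
  constructor
  · ext i j
    have h := congrFun (congrFun hM.1 i) j
    simp only [Matrix.conjTranspose_apply, star_trivial, Matrix.of_apply] at h ⊢
    by_cases hp : P i = P j
    · rw [if_pos hp, if_pos hp.symm, h]
    · rw [if_neg hp, if_neg (fun h' => hp h'.symm)]
  · intro x
    have key : dotProduct (star x)
          ((Matrix.of fun i j => if P i = P j then M i j else 0).mulVec x)
        = ∑ t : Bool, dotProduct (star (fun i => if P i = t then x i else 0))
            (M.mulVec (fun i => if P i = t then x i else 0)) := by
      simp only [dotProduct, Matrix.mulVec, star_trivial, Matrix.of_apply,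
        Finset.mul_sum, Pi.star_apply]
      rw [Finset.sum_comm (γ := Bool)]
      refine Finset.sum_congr rfl fun i _ => ?_
      rw [Finset.sum_comm (γ := Bool)]
      refine Finset.sum_congr rfl fun j _ => ?_
      cases hpi : P i <;> cases hpj : P j <;> simp [hpi, hpj]
    rw [key]
    exact Finset.sum_nonneg fun t _ => hM.dotProduct_mulVec_nonneg _

lemma fsum_eq {m : ℕ} (α : Fin m →₀ ℕ) : (α.sum fun _ e => e) = ∑ i, α i :=
  Finsupp.sum_fintype _ _ (fun _ => rfl)

/-- If the objective polynomial `p` and all constraint polynomials `g j` have only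
even-degree monomials, and `y` is feasible for the order-`γ` moment relaxation
(moment matrix PSD, localizing matrices PSD, `y₀ = 1`), then the sequence `y'`
obtained by zeroing all odd-degree entries of `y` is also feasible and gives
the same objective value `L_{y'}{p} = L_y{p}`. -/
theorem stmt5 (m γ r : ℕ) (p : MvPolynomial (Fin m) ℝ)
    (g : Fin r → MvPolynomial (Fin m) ℝ) (d : Fin r → ℕ)
    (hp : ∀ α ∈ p.support, Even (α.sum fun _ e => e))
    (hg : ∀ j, ∀ α ∈ (g j).support, Even (α.sum fun _ e => e))
    (y : (Fin m → ℕ) → ℝ)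
    (hy0 : y (fun _ => 0) = 1)
    (hM : (Matrix.of (fun α β : {a : Fin m → Fin (γ + 1) // ∑ i, (a i : ℕ) ≤ γ} =>
        y (fun i => (α.1 i : ℕ) + (β.1 i : ℕ)))).PosSemidef)
    (hL : ∀ j, (Matrix.of
        (fun α β : {a : Fin m → Fin (γ + 1) // ∑ i, (a i : ℕ) ≤ d j} =>
          ∑ δ ∈ (g j).support,
            (g j).coeff δ * y (fun i => (α.1 i : ℕ) + (β.1 i : ℕ) + δ i))).PosSemidef) :
    ∃ y' : (Fin m → ℕ) → ℝ,
      (∀ α, y' α = if Even (∑ i, α i) then y α else 0) ∧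
      y' (fun _ => 0) = 1 ∧
      (Matrix.of (fun α β : {a : Fin m → Fin (γ + 1) // ∑ i, (a i : ℕ) ≤ γ} =>
        y' (fun i => (α.1 i : ℕ) + (β.1 i : ℕ)))).PosSemidef ∧
      (∀ j, (Matrix.of
        (fun α β : {a : Fin m → Fin (γ + 1) // ∑ i, (a i : ℕ) ≤ d j} =>
          ∑ δ ∈ (g j).support,
            (g j).coeff δ * y' (fun i => (α.1 i : ℕ) + (β.1 i : ℕ) + δ i))).PosSemidef) ∧
      ∑ α ∈ p.support, p.coeff α * y' α = ∑ α ∈ p.support, p.coeff α * y α := by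
  refine ⟨fun α => if Even (∑ i, α i) then y α else 0, fun _ => rfl, by simp [hy0], ?_, ?_, ?_⟩
  · -- moment matrix
    have heq : (Matrix.of (fun α β : {a : Fin m → Fin (γ + 1) // ∑ i, (a i : ℕ) ≤ γ} =>
          if Even (∑ i, ((α.1 i : ℕ) + (β.1 i : ℕ))) then
            y (fun i => (α.1 i : ℕ) + (β.1 i : ℕ)) else 0))
        = Matrix.of (fun α β =>
            if (decide (Even (∑ i, (α.1 i : ℕ))) = decide (Even (∑ i, (β.1 i : ℕ)))) then
              (Matrix.of (fun α β : {a : Fin m → Fin (γ + 1) // ∑ i, (a i : ℕ) ≤ γ} =>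
                y (fun i => (α.1 i : ℕ) + (β.1 i : ℕ)))) α β else 0) := by
      ext α β
      simp only [Matrix.of_apply]
      refine if_congr ?_ rfl rfl
      rw [Finset.sum_add_distrib, Nat.even_add]
      exact decide_eq_decide.symm
    exact heq ▸ psd_zero_cross _ hM _
  · intro j
    have hE : ∀ δ ∈ (g j).support, Even (∑ i, δ i) := fun δ hδ => fsum_eq δ ▸ hg j δ hδ
    have heq : (Matrix.of (fun α β : {a : Fin m → Fin (γ + 1) // ∑ i, (a i : ℕ) ≤ d j} =>
          ∑ δ ∈ (g j).support, (g j).coeff δ *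
            (if Even (∑ i, ((α.1 i : ℕ) + (β.1 i : ℕ) + δ i)) then
              y (fun i => (α.1 i : ℕ) + (β.1 i : ℕ) + δ i) else 0)))
        = Matrix.of (fun α β =>
            if (decide (Even (∑ i, (α.1 i : ℕ))) = decide (Even (∑ i, (β.1 i : ℕ)))) then
              (Matrix.of (fun α β : {a : Fin m → Fin (γ + 1) // ∑ i, (a i : ℕ) ≤ d j} =>
                ∑ δ ∈ (g j).support,
                  (g j).coeff δ * y (fun i => (α.1 i : ℕ) + (β.1 i : ℕ) + δ i))) α β else 0) := by
      ext α β
      simp only [Matrix.of_apply]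
      by_cases hpq : decide (Even (∑ i, (α.1 i : ℕ))) = decide (Even (∑ i, (β.1 i : ℕ)))
      · rw [if_pos hpq]
        refine Finset.sum_congr rfl fun δ hδ => ?_
        rw [if_pos]
        rw [Finset.sum_add_distrib, Finset.sum_add_distrib, Nat.even_add]
        exact iff_of_true (Nat.even_add.mpr (decide_eq_decide.mp hpq)) (hE δ hδ)
      · rw [if_neg hpq]
        refine Finset.sum_eq_zero fun δ hδ => ?_
        rw [if_neg, mul_zero]
        intro hcon
        rw [Finset.sum_add_distrib, Finset.sum_add_distrib, Nat.even_add] at hcon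
        exact hpq (decide_eq_decide.mpr (Nat.even_add.mp (hcon.mpr (hE δ hδ))))
    exact heq ▸ psd_zero_cross _ (hL j) _
  · refine Finset.sum_congr rfl fun α hα => ?_
    beta_reduce
    rw [if_pos (fsum_eq α ▸ hp α hα)]
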